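/- arXiv:2007.16114 — 2 statements merged into one kernel-verified Lean document; each statement's English description precedes it below -/
import Mathlib

section
/- For every natural number n, the cardinal B-spline B_n(x) = (1/n!) · Δ^{n+1} x_+^n, where Δ^{n+1} f(x) = Σ_{ℓ=0}^{n+1} (-1)^ℓ C(n+1,ℓ) f(x-ℓ) and x_+^n = (max(0,x))^n, satisfies B_n(x) ≥ 0 for all real x. -/
open MeasureTheory

noncomputable def truncPow (x : ℝ) (n : ℕ) : ℝ := if 0 ≤ x then x ^ n else 0

noncomputable def findiff (m : ℕ) (f : ℝ → ℝ) (x : ℝ) : ℝ :=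
  ∑ ℓ ∈ Finset.range (m + 1), (-1 : ℝ) ^ ℓ * (m.choose ℓ : ℝ) * f (x - ℓ)

noncomputable def Bspline (n : ℕ) (x : ℝ) : ℝ :=
  (1 / (n.factorial : ℝ)) * findiff (n + 1) (fun t => truncPow t n) x

lemma truncPow_mono (n : ℕ) : Monotone (fun x : ℝ => truncPow x n) := by
  intro a b hab
  simp only [truncPow]
  split_ifs with ha hb hb
  · exact pow_le_pow_left₀ ha hab n
  · exact absurd (ha.trans hab) hb
  · positivity
  · exact le_refl 0

lemma truncPow_eq_max (n : ℕ) (hn : 1 ≤ n) (x : ℝ) : truncPow x n = (max x 0) ^ n := by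
  rcases le_or_gt 0 x with h | h
  · simp [truncPow, h, max_eq_left h]
  · simp [truncPow, not_le.mpr h, max_eq_right h.le, zero_pow (by omega : n ≠ 0)]

lemma truncPow_cont (n : ℕ) (hn : 1 ≤ n) : Continuous (fun x : ℝ => truncPow x n) := by
  have : (fun x : ℝ => truncPow x n) = fun x => (max x 0) ^ n := by
    ext x; exact truncPow_eq_max n hn x
  rw [this]
  exact (continuous_id.max continuous_const).pow n

lemma truncPow_intervalIntegrable (n : ℕ) (a b : ℝ) :
    IntervalIntegrable (fun t => truncPow t n) volume a b :=
  (truncPow_mono n).intervalIntegrable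

lemma truncPow_hasDerivAt_pos (n : ℕ) {x : ℝ} (hx : 0 < x) :
    HasDerivAt (fun t => truncPow t (n + 1) / (n + 1)) (truncPow x n) x := by
  have h1 : HasDerivAt (fun t : ℝ => t ^ (n + 1) / (n + 1)) (x ^ n) x := by
    have := (hasDerivAt_pow (n + 1) x).div_const ((n : ℝ) + 1)
    simpa [mul_div_assoc, mul_comm, mul_div_cancel_left₀, Nat.cast_add_one_ne_zero n] using this
  have h2 : (fun t => truncPow t (n + 1) / (n + 1)) =ᶠ[nhds x] fun t : ℝ => t ^ (n + 1) / (n + 1) := by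
    filter_upwards [eventually_gt_nhds hx] with t ht
    simp [truncPow, ht.le]
  have := h1.congr_of_eventuallyEq h2
  simpa [truncPow, hx.le] using this

lemma truncPow_hasDerivAt_neg (n : ℕ) {x : ℝ} (hx : x < 0) :
    HasDerivAt (fun t => truncPow t (n + 1) / (n + 1)) (truncPow x n) x := by
  have h1 : HasDerivAt (fun _ : ℝ => (0 : ℝ)) 0 x := hasDerivAt_const x 0
  have h2 : (fun t => truncPow t (n + 1) / (n + 1)) =ᶠ[nhds x] fun _ : ℝ => (0 : ℝ) := by
    filter_upwards [eventually_lt_nhds hx] with t ht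
    simp [truncPow, not_le.mpr ht]
  have := h1.congr_of_eventuallyEq h2
  simpa [truncPow, not_le.mpr hx] using this

lemma truncPow_hasDerivWithinAt_zero (n : ℕ) :
    HasDerivWithinAt (fun t => truncPow t (n + 1) / (n + 1)) (truncPow 0 n) (Set.Ioi 0) 0 := by
  have h1 : HasDerivWithinAt (fun t : ℝ => t ^ (n + 1) / (n + 1)) (truncPow 0 n) (Set.Ioi 0) 0 := by
    have := ((hasDerivAt_pow (n + 1) (0 : ℝ)).div_const ((n : ℝ) + 1)).hasDerivWithinAt
      (s := Set.Ioi 0)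
    rcases Nat.eq_zero_or_pos n with rfl | hn
    · simpa [truncPow] using this
    · simpa [truncPow, zero_pow (by omega : n ≠ 0)] using this
  refine h1.congr (fun t ht => ?_) ?_
  · simp [truncPow, (Set.mem_Ioi.mp ht).le]
  · simp [truncPow]

lemma truncPow_ftc (n : ℕ) (a b : ℝ) (hab : a ≤ b) :
    ∫ t in a..b, truncPow t n =
      truncPow b (n + 1) / (n + 1) - truncPow a (n + 1) / (n + 1) := by
  apply intervalIntegral.integral_eq_sub_of_hasDeriv_right_of_le hab
  · exact ((truncPow_cont (n + 1) (by omega)).div_const _).continuousOn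
  · intro t ht
    rcases lt_trichotomy t 0 with h | rfl | h
    · exact (truncPow_hasDerivAt_neg n h).hasDerivWithinAt
    · exact truncPow_hasDerivWithinAt_zero n
    · exact (truncPow_hasDerivAt_pos n h).hasDerivWithinAt
  · exact truncPow_intervalIntegrable n a b

lemma findiff_succ (m : ℕ) (f : ℝ → ℝ) (x : ℝ) :
    findiff (m + 1) f x = findiff m f x - findiff m f (x - 1) := by
  simp only [findiff]
  rw [Finset.sum_range_succ' _ (m + 1)]
  push_cast
  have key : ∀ k ∈ Finset.range (m + 1),
      (-1 : ℝ) ^ (k + 1) * ((m + 1).choose (k + 1) : ℝ) * f (x - ((k : ℝ) + 1)) =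
      (-1 : ℝ) ^ (k + 1) * (m.choose (k + 1) : ℝ) * f (x - ((k : ℝ) + 1)) +
      -((-1 : ℝ) ^ k * (m.choose k : ℝ) * f (x - ((k : ℝ) + 1))) := by
    intro k _
    have hc : ((m + 1).choose (k + 1) : ℝ) = m.choose (k + 1) + m.choose k := by
      rw [Nat.choose_succ_succ']; push_cast; ring
    rw [hc]; ring
  rw [Finset.sum_congr rfl key, Finset.sum_add_distrib]
  have hA : ∑ k ∈ Finset.range (m + 1),
      (-1 : ℝ) ^ (k + 1) * (m.choose (k + 1) : ℝ) * f (x - ((k : ℝ) + 1)) =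
      (∑ ℓ ∈ Finset.range (m + 1), (-1 : ℝ) ^ ℓ * (m.choose ℓ : ℝ) * f (x - ℓ)) -
        f x := by
    rw [Finset.sum_range_succ]
    rw [Finset.sum_range_succ' (fun ℓ => (-1 : ℝ) ^ ℓ * (m.choose ℓ : ℝ) * f (x - (ℓ : ℕ))) m]
    push_cast
    simp [Nat.choose_succ_self]
  have hB : ∑ k ∈ Finset.range (m + 1),
      -((-1 : ℝ) ^ k * (m.choose k : ℝ) * f (x - ((k : ℝ) + 1))) =
      -∑ ℓ ∈ Finset.range (m + 1), (-1 : ℝ) ^ ℓ * (m.choose ℓ : ℝ) * f (x - 1 - ℓ) := by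
    rw [← Finset.sum_neg_distrib]
    refine Finset.sum_congr rfl fun k _ => ?_
    rw [show x - 1 - (k : ℝ) = x - ((k : ℝ) + 1) from by ring]
  rw [hA, hB]
  simp only [Nat.choose_zero_right, Nat.cast_one, one_mul, sub_zero, pow_zero]
  ring

lemma Bspline_succ (n : ℕ) (x : ℝ) :
    Bspline (n + 1) x = ∫ t in (x - 1)..x, Bspline n t := by
  have hint : ∀ ℓ : ℕ, IntervalIntegrable (fun t => truncPow (t - ℓ) n) volume (x - 1) x := by
    intro ℓ
    exact (Monotone.intervalIntegrable (fun a b hab => truncPow_mono n (by linarith)))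
  have hInt : ∫ t in (x - 1)..x, Bspline n t =
      (1 / (n.factorial : ℝ)) * ∑ ℓ ∈ Finset.range (n + 2),
        (-1 : ℝ) ^ ℓ * ((n + 1).choose ℓ : ℝ) * ∫ t in (x - 1)..x, truncPow (t - ℓ) n := by
    simp only [Bspline, findiff]
    rw [intervalIntegral.integral_const_mul]
    congr 1
    rw [intervalIntegral.integral_finset_sum]
    · exact Finset.sum_congr rfl fun ℓ _ => by
        rw [intervalIntegral.integral_const_mul]
    · intro ℓ _
      exact ((hint ℓ).const_mul _)
  rw [hInt]
  have heval : ∀ ℓ : ℕ, ∫ t in (x - 1)..x, truncPow (t - ℓ) n =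
      truncPow (x - ℓ) (n + 1) / (n + 1) - truncPow (x - 1 - ℓ) (n + 1) / (n + 1) := by
    intro ℓ
    rw [intervalIntegral.integral_comp_sub_right (fun t => truncPow t n) (ℓ : ℝ),
      truncPow_ftc n _ _ (by linarith)]
  simp only [heval]
  have hsum : ∑ ℓ ∈ Finset.range (n + 2), (-1 : ℝ) ^ ℓ * ((n + 1).choose ℓ : ℝ) *
      (truncPow (x - ℓ) (n + 1) / (n + 1) - truncPow (x - 1 - ℓ) (n + 1) / (n + 1)) =
      (1 / (n + 1)) * (findiff (n + 1) (fun t => truncPow t (n + 1)) x -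
        findiff (n + 1) (fun t => truncPow t (n + 1)) (x - 1)) := by
    simp only [findiff]
    rw [mul_sub, Finset.mul_sum, Finset.mul_sum, ← Finset.sum_sub_distrib]
    refine Finset.sum_congr rfl fun ℓ _ => ?_
    ring
  rw [hsum, ← findiff_succ]
  simp only [Bspline]
  have h1 : ((n + 1).factorial : ℝ) = (n.factorial : ℝ) * (n + 1) := by
    rw [Nat.factorial_succ]; push_cast; ring
  rw [h1]
  field_simp

theorem Bspline_nonneg (n : ℕ) (x : ℝ) : 0 ≤ Bspline n x := by
  induction n generalizing x with
  | zero =>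
    simp only [Bspline, findiff]
    rw [Finset.sum_range_succ, Finset.sum_range_one]
    simp only [Nat.factorial_zero, Nat.choose_self, Nat.choose_zero_right]
    have := truncPow_mono 0 (show x - (1 : ℕ) ≤ x - (0 : ℕ) by push_cast; linarith)
    simp only [Nat.cast_one, Nat.cast_zero] at this ⊢
    simp only [pow_zero, pow_one, Nat.cast_one]
    nlinarith [this]
  | succ m ih =>
    rw [Bspline_succ]
    exact intervalIntegral.integral_nonneg (by linarith) (fun u _ => ih u)
end

section
/- For natural numbers n and m with 0 ≤ m ≤ n-1, the m-th derivative of the cardinal B-spline satisfies the differentiation rule B_n^{(m)}(x) = (1/(n-m)!) Δ^{n+1} x_+^{n-m} for all real x. -/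
open MeasureTheory

lemma trunc_hasDerivAt (k : ℕ) (hk : 2 ≤ k) (x : ℝ) :
    HasDerivAt (fun t => truncPow t k) (k * truncPow x (k - 1)) x := by
  rcases lt_trichotomy x 0 with hx | hx | hx
  · have h0 : truncPow x (k - 1) = 0 := by simp [truncPow, not_le.mpr hx]
    rw [h0, mul_zero]
    have : (fun t : ℝ => (0 : ℝ)) =ᶠ[nhds x] fun t => truncPow t k := by
      filter_upwards [eventually_lt_nhds hx] with t ht
      simp [truncPow, not_le.mpr ht]
    exact (hasDerivAt_const x (0:ℝ)).congr_of_eventuallyEq this.symm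
  · subst hx
    have h0 : truncPow (0:ℝ) (k - 1) = 0 := by
      simp [truncPow]
      omega
    rw [h0, mul_zero]
    rw [hasDerivAt_iff_isLittleO]
    have hO : (fun t : ℝ => truncPow t k) =O[nhds 0] fun t => t ^ k := by
      apply Asymptotics.isBigO_of_le
      intro t
      simp only [truncPow, Real.norm_eq_abs]
      split <;> simp [abs_nonneg]
    have ho : (fun t : ℝ => t ^ k) =o[nhds (0:ℝ)] fun t => t ^ 1 :=
      Asymptotics.isLittleO_pow_pow (by omega)
    have := hO.trans_isLittleO ho
    simp only [pow_one] at this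
    simpa [truncPow, zero_pow (by omega : k ≠ 0)] using this
  · have h0 : truncPow x (k - 1) = x ^ (k - 1) := by simp [truncPow, hx.le]
    rw [h0]
    have hd : HasDerivAt (fun t : ℝ => t ^ k) ((k : ℝ) * x ^ (k - 1)) x := by
      simpa using hasDerivAt_pow k x
    apply hd.congr_of_eventuallyEq
    filter_upwards [eventually_gt_nhds hx] with t ht
    simp [truncPow, ht.le]

lemma findiff_hasDerivAt (M k : ℕ) (hk : 2 ≤ k) (x : ℝ) :
    HasDerivAt (fun t => findiff M (fun s => truncPow s k) t)
      ((k : ℝ) * findiff M (fun s => truncPow s (k - 1)) x) x := by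
  unfold findiff
  rw [Finset.mul_sum]
  apply HasDerivAt.fun_sum
  intro i _
  have h := (trunc_hasDerivAt k hk (x - i)).comp x
    ((hasDerivAt_id x).sub_const (i : ℝ))
  simp only [mul_one] at h
  have := h.const_mul ((-1 : ℝ) ^ i * (M.choose i : ℝ))
  convert this using 1
  · rfl
  · rfl
  ring

theorem Bspline_iteratedDeriv (n m : ℕ) (hm : m + 1 ≤ n) (x : ℝ) :
    iteratedDeriv m (Bspline n) x =
      (1 / ((n - m).factorial : ℝ)) * findiff (n + 1) (fun t => truncPow t (n - m)) x := by
  revert hm x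
  induction m with
  | zero => intro hm x; simp [iteratedDeriv_zero, Bspline]
  | succ m ih =>
    intro hm x
    have hm' : m + 1 ≤ n := by omega
    rw [iteratedDeriv_succ]
    have hfun : iteratedDeriv m (Bspline n) =
        fun y => (1 / ((n - m).factorial : ℝ)) * findiff (n + 1) (fun t => truncPow t (n - m)) y :=
      funext fun y => ih hm' y
    rw [hfun]
    have hk : 2 ≤ n - m := by omega
    have hd := ((findiff_hasDerivAt (n + 1) (n - m) hk x).const_mul
      (1 / ((n - m).factorial : ℝ)))
    rw [hd.deriv]
    have hsub : n - m - 1 = n - (m + 1) := by omega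
    rw [hsub]
    rw [← mul_assoc]
    congr 1
    have hne : n - m ≠ 0 := by omega
    have hfac : ((n - m).factorial : ℝ) =
        ((n - m : ℕ) : ℝ) * ((n - (m + 1)).factorial : ℝ) := by
      rw [← hsub]
      exact_mod_cast (Nat.mul_factorial_pred (show n - m ≠ 0 by omega)).symm
    rw [hfac]
    have h1 : ((n - m : ℕ) : ℝ) ≠ 0 := Nat.cast_ne_zero.mpr hne
    have h2 : ((n - (m + 1)).factorial : ℝ) ≠ 0 := Nat.cast_ne_zero.mpr (Nat.factorial_ne_zero _)
    field_simp
end
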